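/- arXiv:2105.04970 — 7 statements merged into one kernel-verified Lean document; each statement's English description precedes it below -/
import Mathlib

section
/- Let H be a Hermitian operator on a finite-dimensional complex inner product space V, let E₀ be its least eigenvalue, and let Φ be a unit eigenvector with HΦ = E₀Φ. Then for every linear operator A on V, the expectation ⟨Φ, [A*, [H, A]] Φ⟩ is a real number, it equals ⟨AΦ, (H − E₀)AΦ⟩ + ⟨A*Φ, (H − E₀)A*Φ⟩, and consequently ⟨AΦ, (H − E₀·id)AΦ⟩ ≤ ⟨Φ, [A*, [H, A]] Φ⟩. -/
section
variable {V : Type*} [NormedAddCommGroup V] [InnerProductSpace ℂ V] [FiniteDimensional ℂ V]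

lemma aux_rayleigh_lb (H : V →ₗ[ℂ] V) (hH : H.IsSymmetric) (E₀ : ℝ)
    (hmin : ∀ μ : ℝ, Module.End.HasEigenvalue (H : Module.End ℂ V) (μ : ℂ) → E₀ ≤ μ)
    (x : V) : E₀ * ‖x‖^2 ≤ ((inner ℂ x (H x) : ℂ)).re := by
  classical
  set b := hH.eigenvectorBasis (n := Module.finrank ℂ V) rfl with hb
  have hcc : ∀ i : Fin (Module.finrank ℂ V),
      (inner ℂ x (b i) * inner ℂ (b i) x : ℂ) = (Complex.normSq (inner ℂ (b i) x) : ℝ) := by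
    intro i
    rw [← inner_conj_symm x (b i), mul_comm, Complex.mul_conj]
  have h2 : ∀ i, (inner ℂ x (b i) * inner ℂ (b i) (H x) : ℂ)
      = (hH.eigenvalues rfl i : ℂ) * ((Complex.normSq (inner ℂ (b i) x) : ℝ) : ℂ) := by
    intro i
    have h := (hH (b i) x).symm
    rw [hH.apply_eigenvectorBasis, inner_smul_left, RCLike.conj_ofReal] at h
    rw [h, mul_left_comm, hcc i]
    norm_num [RCLike.ofReal_alg, Complex.coe_algebraMap]
  have h1 : ((inner ℂ x (H x) : ℂ)).re
      = ∑ i, hH.eigenvalues rfl i * Complex.normSq (inner ℂ (b i) x) := by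
    rw [← b.sum_inner_mul_inner x (H x)]
    rw [Complex.re_sum]
    exact Finset.sum_congr rfl fun i _ => by rw [h2 i]; simp
  have h3 : ‖x‖^2 = ∑ i, Complex.normSq (inner ℂ (b i) x) := by
    have h := b.sum_inner_mul_inner x x
    have : ((inner ℂ x x : ℂ)).re = ‖x‖^2 := by
      simp [inner_self_eq_norm_sq_to_K, ← Complex.ofReal_pow]
    rw [← this, ← h, Complex.re_sum]
    exact Finset.sum_congr rfl fun i _ => by rw [hcc i, Complex.ofReal_re]
  rw [h1, h3, Finset.mul_sum]
  refine Finset.sum_le_sum fun i _ => ?_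
  exact mul_le_mul_of_nonneg_right (hmin _ (hH.hasEigenvalue_eigenvalues rfl i))
    (Complex.normSq_nonneg _)

lemma aux_K_symm (H : V →ₗ[ℂ] V) (hH : H.IsSymmetric) (E₀ : ℝ) :
    (H - (E₀ : ℂ) • LinearMap.id : V →ₗ[ℂ] V).IsSymmetric := by
  intro x y
  simp only [LinearMap.sub_apply, LinearMap.smul_apply, LinearMap.id_apply,
    inner_sub_left, inner_sub_right, inner_smul_left, inner_smul_right, hH x y,
    Complex.conj_ofReal]

lemma aux_im_zero (K : V →ₗ[ℂ] V) (hK : K.IsSymmetric) (x : V) :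
    ((inner ℂ x (K x) : ℂ)).im = 0 := by
  have h : (starRingEnd ℂ) (inner ℂ x (K x) : ℂ) = inner ℂ x (K x) := by
    rw [inner_conj_symm]; exact hK x x
  exact Complex.conj_eq_iff_im.mp h
end



/-- For a Hermitian operator `H` on a finite-dimensional complex inner
product space with least eigenvalue `E₀` and unit ground state `Φ`, and any operator `A`,
the expectation `⟨Φ, [A*, [H, A]] Φ⟩` is real, equals
`⟨AΦ, (H − E₀)AΦ⟩ + ⟨A*Φ, (H − E₀)A*Φ⟩`, and dominates `⟨AΦ, (H − E₀)AΦ⟩`. -/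
theorem double_commutator_expectation
    {V : Type*} [NormedAddCommGroup V] [InnerProductSpace ℂ V] [FiniteDimensional ℂ V]
    (H : V →ₗ[ℂ] V) (hH : H.IsSymmetric) (E₀ : ℝ)
    (hmin : ∀ μ : ℝ, Module.End.HasEigenvalue (H : Module.End ℂ V) (μ : ℂ) → E₀ ≤ μ)
    (Φ : V) (hΦ : ‖Φ‖ = 1) (hHΦ : H Φ = (E₀ : ℂ) • Φ)
    (A : V →ₗ[ℂ] V) :
    ((inner ℂ Φ (((LinearMap.adjoint A) ∘ₗ (H ∘ₗ A - A ∘ₗ H)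
        - (H ∘ₗ A - A ∘ₗ H) ∘ₗ (LinearMap.adjoint A)) Φ) : ℂ)).im = 0 ∧
    (inner ℂ Φ (((LinearMap.adjoint A) ∘ₗ (H ∘ₗ A - A ∘ₗ H)
        - (H ∘ₗ A - A ∘ₗ H) ∘ₗ (LinearMap.adjoint A)) Φ) : ℂ)
      = (inner ℂ (A Φ) (((H - (E₀ : ℂ) • LinearMap.id : V →ₗ[ℂ] V)) (A Φ)) : ℂ)
        + (inner ℂ ((LinearMap.adjoint A) Φ)
            (((H - (E₀ : ℂ) • LinearMap.id : V →ₗ[ℂ] V)) ((LinearMap.adjoint A) Φ)) : ℂ) ∧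
    ((inner ℂ (A Φ) (((H - (E₀ : ℂ) • LinearMap.id : V →ₗ[ℂ] V)) (A Φ)) : ℂ)).re
      ≤ ((inner ℂ Φ (((LinearMap.adjoint A) ∘ₗ (H ∘ₗ A - A ∘ₗ H)
        - (H ∘ₗ A - A ∘ₗ H) ∘ₗ (LinearMap.adjoint A)) Φ) : ℂ)).re := by
  have hK := aux_K_symm H hH E₀
  set K : V →ₗ[ℂ] V := H - (E₀ : ℂ) • LinearMap.id with hKdef
  have hΦH : ∀ z : V, (inner ℂ Φ (H z) : ℂ) = (E₀ : ℂ) * inner ℂ Φ z := by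
    intro z
    rw [← hH Φ z, hHΦ, inner_smul_left, Complex.conj_ofReal]
  have e1 : (inner ℂ Φ ((LinearMap.adjoint A) ((H ∘ₗ A - A ∘ₗ H) Φ)) : ℂ)
      = inner ℂ (A Φ) (H (A Φ)) - (E₀ : ℂ) * inner ℂ (A Φ) (A Φ) := by
    rw [LinearMap.adjoint_inner_right]
    simp only [LinearMap.sub_apply, LinearMap.coe_comp, Function.comp_apply, hHΦ,
      map_smul, inner_sub_right, inner_smul_right]
  have e2 : (inner ℂ Φ ((H ∘ₗ A - A ∘ₗ H) ((LinearMap.adjoint A) Φ)) : ℂ)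
      = (E₀ : ℂ) * inner ℂ ((LinearMap.adjoint A) Φ) ((LinearMap.adjoint A) Φ)
        - inner ℂ ((LinearMap.adjoint A) Φ) (H ((LinearMap.adjoint A) Φ)) := by
    have hAw : ∀ w : V, (inner ℂ Φ (A w) : ℂ) = inner ℂ ((LinearMap.adjoint A) Φ) w := by
      intro w; rw [← LinearMap.adjoint_inner_left]
    simp only [LinearMap.sub_apply, LinearMap.coe_comp, Function.comp_apply, inner_sub_right,
      hΦH, hAw]
  have key : (inner ℂ Φ (((LinearMap.adjoint A) ∘ₗ (H ∘ₗ A - A ∘ₗ H)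
        - (H ∘ₗ A - A ∘ₗ H) ∘ₗ (LinearMap.adjoint A)) Φ) : ℂ)
      = (inner ℂ (A Φ) (K (A Φ)) : ℂ)
        + (inner ℂ ((LinearMap.adjoint A) Φ) (K ((LinearMap.adjoint A) Φ)) : ℂ) := by
    rw [LinearMap.sub_apply, inner_sub_right, LinearMap.comp_apply, LinearMap.comp_apply, e1, e2, hKdef]
    simp only [LinearMap.sub_apply, LinearMap.smul_apply, LinearMap.id_apply,
      inner_sub_right, inner_smul_right]
    ring
  have him1 := aux_im_zero K hK (A Φ)
  have him2 := aux_im_zero K hK ((LinearMap.adjoint A) Φ)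
  have hpos : 0 ≤ ((inner ℂ ((LinearMap.adjoint A) Φ) (K ((LinearMap.adjoint A) Φ)) : ℂ)).re := by
    have h := aux_rayleigh_lb H hH E₀ hmin ((LinearMap.adjoint A) Φ)
    have : ((inner ℂ ((LinearMap.adjoint A) Φ) (K ((LinearMap.adjoint A) Φ)) : ℂ)).re
        = ((inner ℂ ((LinearMap.adjoint A) Φ) (H ((LinearMap.adjoint A) Φ)) : ℂ)).re
          - E₀ * ‖(LinearMap.adjoint A) Φ‖^2 := by
      rw [hKdef]
      simp only [LinearMap.sub_apply, LinearMap.smul_apply, LinearMap.id_apply,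
        inner_sub_right, inner_smul_right, Complex.sub_re, Complex.mul_re,
        Complex.ofReal_re, Complex.ofReal_im]
      rw [inner_self_eq_norm_sq_to_K]
      simp [← Complex.ofReal_pow]
    linarith
  refine ⟨?_, key, ?_⟩
  · rw [key]; simp [him1, him2]
  · rw [key]; simp only [Complex.add_re]; linarith
end

section
/- Let H be a Hermitian operator on a finite-dimensional complex inner product space V, let Φ be an eigenvector of H with eigenvalue E₀, let A be any linear operator on V, and let g: ℝ → ℂ be integrable. Define ĝ(E) = ∫_ℝ g(t) e^{iEt} dt. Then ∫_ℝ g(t) · e^{itH} A e^{−itH} Φ dt = ĝ(H − E₀)(AΦ), where ĝ(H − E₀) is the operator acting as multiplication by ĝ(λ − E₀) on each eigenspace of H with eigenvalue λ. -/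
open MeasureTheory Nat Complex

lemma exp_apply_eig {V : Type*} [NormedAddCommGroup V] [InnerProductSpace ℂ V]
    [FiniteDimensional ℂ V] (T : V →L[ℂ] V) (c : ℂ) (v : V) (h : T v = c • v) :
    NormedSpace.exp T v = Complex.exp c • v := by
  have hpow : ∀ n : ℕ, (T ^ n) v = c ^ n • v := by
    intro n
    induction n with
    | zero => simp
    | succ n ih =>
      simp [pow_succ, ContinuousLinearMap.mul_apply, h, _root_.map_smul, ih, smul_smul, mul_comm]
  have hs : Summable fun n : ℕ => ((n ! : ℂ))⁻¹ • T ^ n :=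
    NormedSpace.expSeries_summable' T
  rw [NormedSpace.exp_eq_tsum (𝕂 := ℂ)]
  calc (∑' n : ℕ, ((n ! : ℂ))⁻¹ • T ^ n) v
      = ∑' n : ℕ, (((n ! : ℂ))⁻¹ • T ^ n) v := (ContinuousLinearMap.apply ℂ V v).map_tsum hs
    _ = ∑' n : ℕ, (((n ! : ℂ))⁻¹ • c ^ n) • v := by
        refine tsum_congr fun n => ?_
        rw [ContinuousLinearMap.smul_apply, hpow n, smul_smul, smul_eq_mul]
    _ = (∑' n : ℕ, ((n ! : ℂ))⁻¹ • c ^ n) • v := by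
        exact Summable.tsum_smul_const (NormedSpace.expSeries_summable' c) v
    _ = Complex.exp c • v := by
        congr 1
        rw [Complex.exp_eq_exp_ℂ, NormedSpace.exp_eq_tsum (𝕂 := ℂ)]



/-- Functional calculus with respect to an orthonormal eigenbasis `b` with (real)
eigenvalues `μ`: the operator acting as multiplication by `h (μ i)` on the span of `b i`. -/
noncomputable def specFun {ι V : Type*} [Fintype ι] [NormedAddCommGroup V]
    [InnerProductSpace ℂ V] (b : OrthonormalBasis ι ℂ V) (μ : ι → ℝ) (h : ℝ → ℂ) :
    V →L[ℂ] V :=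
  ∑ i, h (μ i) • ((innerSL ℂ (b i)).smulRight (b i))

/-- For a Hermitian `H` (given by an orthonormal eigenbasis `b` with real
eigenvalues `μ`), an eigenvector `Φ` with `HΦ = E₀Φ`, any operator `A`, and integrable
`g : ℝ → ℂ`, the smeared Heisenberg evolution applied to `Φ` equals `ĝ(H − E₀)(AΦ)`,
where `ĝ(E) = ∫ g(t) e^{iEt} dt`. -/
theorem smeared_evolution_eq_functional_calculus
    {V : Type*} [NormedAddCommGroup V] [InnerProductSpace ℂ V] [FiniteDimensional ℂ V]
    {ι : Type*} [Fintype ι]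
    (b : OrthonormalBasis ι ℂ V) (μ : ι → ℝ)
    (H : V →L[ℂ] V) (hH : ∀ i, H (b i) = (μ i : ℂ) • b i)
    (Φ : V) (E₀ : ℝ) (hΦ : H Φ = (E₀ : ℂ) • Φ)
    (A : V →L[ℂ] V) (g : ℝ → ℂ) (hg : MeasureTheory.Integrable g) :
    ∫ t : ℝ, g t • (NormedSpace.exp ((Complex.I * (t : ℂ)) • H))
        (A ((NormedSpace.exp (-(Complex.I * (t : ℂ)) • H)) Φ))
      = specFun b μ
          (fun lam => ∫ t : ℝ, g t * Complex.exp (Complex.I * ((lam - E₀ : ℝ) : ℂ) * (t : ℂ)))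
          (A Φ) := by
  set c : ι → ℂ := fun i => inner ℂ (b i) (A Φ) with hc
  have key : ∀ t : ℝ,
      g t • (NormedSpace.exp ((Complex.I * (t : ℂ)) • H))
        (A ((NormedSpace.exp (-(Complex.I * (t : ℂ)) • H)) Φ))
      = ∑ i, (g t * Complex.exp (Complex.I * ((μ i - E₀ : ℝ) : ℂ) * t) * c i) • b i := by
    intro t
    have h1 : (NormedSpace.exp (-(Complex.I * (t : ℂ)) • H)) Φ
        = Complex.exp (-(Complex.I * t) * E₀) • Φ := by
      refine exp_apply_eig _ _ _ ?_
      rw [ContinuousLinearMap.smul_apply, hΦ, smul_smul]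
    have h2 : ∀ i, (NormedSpace.exp ((Complex.I * (t : ℂ)) • H)) (b i)
        = Complex.exp (Complex.I * t * μ i) • b i := by
      intro i
      refine exp_apply_eig _ _ _ ?_
      rw [ContinuousLinearMap.smul_apply, hH, smul_smul]
    have hAΦ : A Φ = ∑ i, c i • b i := (b.sum_repr' (A Φ)).symm
    rw [h1, _root_.map_smul, _root_.map_smul]
    rw [hAΦ, map_sum, Finset.smul_sum, Finset.smul_sum]
    refine Finset.sum_congr rfl fun i _ => ?_
    rw [_root_.map_smul, h2 i, smul_smul, smul_smul, smul_smul]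
    congr 1
    have hexp : Complex.exp (-(Complex.I * t) * E₀) * Complex.exp (Complex.I * t * μ i)
        = Complex.exp (Complex.I * ((μ i - E₀ : ℝ) : ℂ) * t) := by
      rw [← Complex.exp_add]; congr 1; push_cast; ring
    calc g t * Complex.exp (-(Complex.I * t) * E₀) * c i * Complex.exp (Complex.I * t * μ i)
        = g t * (Complex.exp (-(Complex.I * t) * E₀) * Complex.exp (Complex.I * t * μ i)) * c i := by
          ring
      _ = _ := by rw [hexp]
  have hint : ∀ i : ι, Integrable fun t : ℝ =>
      (g t * Complex.exp (Complex.I * ((μ i - E₀ : ℝ) : ℂ) * t) * c i) • b i := by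
    intro i
    refine Integrable.smul_const ?_ (b i)
    refine Integrable.mul_const ?_ (c i)
    have : Integrable fun t : ℝ =>
        Complex.exp (Complex.I * ((μ i - E₀ : ℝ) : ℂ) * t) * g t := by
      refine hg.bdd_mul (c := 1) ?_ (Filter.Eventually.of_forall fun t => ?_)
      · exact (Continuous.cexp (by continuity)).aestronglyMeasurable
      · rw [Complex.norm_exp]
        simp
    simpa [mul_comm] using this
  calc ∫ t : ℝ, g t • (NormedSpace.exp ((Complex.I * (t : ℂ)) • H))
        (A ((NormedSpace.exp (-(Complex.I * (t : ℂ)) • H)) Φ))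
      = ∫ t : ℝ, ∑ i, (g t * Complex.exp (Complex.I * ((μ i - E₀ : ℝ) : ℂ) * t) * c i) • b i := by
        exact integral_congr_ae (Filter.Eventually.of_forall key)
    _ = ∑ i, ∫ t : ℝ, (g t * Complex.exp (Complex.I * ((μ i - E₀ : ℝ) : ℂ) * t) * c i) • b i :=
        integral_finset_sum _ fun i _ => hint i
    _ = ∑ i, ((∫ t : ℝ, g t * Complex.exp (Complex.I * ((μ i - E₀ : ℝ) : ℂ) * t)) * c i) • b i := by
        refine Finset.sum_congr rfl fun i _ => ?_
        rw [integral_smul_const, integral_mul_const]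
    _ = specFun b μ
          (fun lam => ∫ t : ℝ, g t * Complex.exp (Complex.I * ((lam - E₀ : ℝ) : ℂ) * (t : ℂ)))
          (A Φ) := by
        simp only [specFun, ContinuousLinearMap.sum_apply, ContinuousLinearMap.smul_apply,
          ContinuousLinearMap.smulRight_apply, innerSL_apply_apply, smul_smul, hc]
end

section
/- Let H and O be n×n complex matrices and let t ∈ ℝ. Then the map u ↦ exp(it(H + uO)) from ℝ to n×n complex matrices is differentiable, and its derivative at u is (it)·∫₀¹ exp(itw(H + uO)) · O · exp(it(1−w)(H + uO)) dw (Duhamel formula). -/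
open scoped Matrix.Norms.L2Operator

open NormedSpace intervalIntegral

section aux
variable {n : ℕ}
local notation "M" => Matrix (Fin n) (Fin n) ℂ

lemma duhamel_path_deriv (X Y : M) (s : ℝ) :
    HasDerivAt (fun s : ℝ => exp (s • X) * exp ((1 - s) • Y))
      (exp (s • X) * (X - Y) * exp ((1 - s) • Y)) s := by
  have hX : HasDerivAt (fun s : ℝ => exp (s • X)) (exp (s • X) * X) s := by
    exact hasDerivAt_exp_smul_const X s
  have hY0 : HasDerivAt (fun v : ℝ => exp (v • Y)) (Y * exp ((1 - s) • Y)) (1 - s) := by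
    exact hasDerivAt_exp_smul_const' Y (1 - s)
  have hlin : HasDerivAt (fun s : ℝ => 1 - s) (-1 : ℝ) s := by
    simpa using (hasDerivAt_id s).const_sub 1
  have hY : HasDerivAt (fun s : ℝ => exp ((1 - s) • Y))
      ((-1 : ℝ) • (Y * exp ((1 - s) • Y))) s := hY0.scomp s hlin
  have := hX.mul hY
  refine this.congr_deriv ?_
  symm
  simp only [neg_one_smul, mul_neg]
  rw [mul_sub, sub_mul, sub_eq_add_neg, mul_assoc, mul_assoc]

lemma exp_sub_exp (X Y : M) :
    exp X - exp Y
      = ∫ s in (0:ℝ)..1, exp (s • X) * (X - Y) * exp ((1 - s) • Y) := by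
  let _ : NormedAlgebra ℚ (Matrix (Fin n) (Fin n) ℂ) := .restrictScalars ℚ ℂ _
  have hcont : Continuous fun s : ℝ => exp (s • X) * (X - Y) * exp ((1 - s) • Y) :=
    ((exp_continuous.comp ((continuous_id).smul continuous_const)).mul
      continuous_const).mul
      (exp_continuous.comp (((continuous_const.sub continuous_id)).smul continuous_const))
  have := intervalIntegral.integral_eq_sub_of_hasDerivAt
    (f := fun s : ℝ => exp (s • X) * exp ((1 - s) • Y))
    (fun s _ => duhamel_path_deriv X Y s) (hcont.intervalIntegrable 0 1)
  rw [this]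
  simp [exp_zero]
end aux


/-- **Duhamel formula.** For `n×n` complex matrices `H`, `O` and `t ∈ ℝ`,
the map `u ↦ exp(it(H + uO))` is differentiable in `u`, with derivative
`(it)·∫₀¹ exp(itw(H+uO)) O exp(it(1−w)(H+uO)) dw`. -/
theorem duhamel_formula {n : ℕ} (H O : Matrix (Fin n) (Fin n) ℂ) (t : ℝ) (u : ℝ) :
    HasDerivAt
      (fun u : ℝ => NormedSpace.exp ((Complex.I * (t : ℂ)) • (H + (u : ℂ) • O)))
      ((Complex.I * (t : ℂ)) • ∫ w in (0:ℝ)..1,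
        NormedSpace.exp ((Complex.I * (t : ℂ) * (w : ℂ)) • (H + (u : ℂ) • O)) * O *
        NormedSpace.exp ((Complex.I * (t : ℂ) * ((1 : ℂ) - (w : ℂ))) • (H + (u : ℂ) • O)))
      u := by
  set A : Matrix (Fin n) (Fin n) ℂ := (Complex.I * (t : ℂ)) • (H + (u : ℂ) • O) with hA
  set B : Matrix (Fin n) (Fin n) ℂ := (Complex.I * (t : ℂ)) • O with hB
  have hsmul : ∀ (r : ℝ) (X : Matrix (Fin n) (Fin n) ℂ), r • X = ((r : ℂ)) • X := by
    intro r X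
    rw [← smul_one_smul ℂ r X]
    norm_num
  set g : ℝ → Matrix (Fin n) (Fin n) ℂ := fun h =>
    ∫ s in (0:ℝ)..1, exp (s • (A + h • B)) * B * exp ((1 - s) • A) with hg
  -- continuity of g
  have hgc : Continuous g := by
    let _ : NormedAlgebra ℚ (Matrix (Fin n) (Fin n) ℂ) := .restrictScalars ℚ ℂ _
    apply intervalIntegral.continuous_parametric_intervalIntegral_of_continuous'
      (f := fun h s => exp (s • (A + h • B)) * B * exp ((1 - s) • A))
    exact ((exp_continuous.comp (continuous_snd.smul
        (continuous_const.add (continuous_fst.smul continuous_const)))).mul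
        continuous_const).mul
      (exp_continuous.comp ((continuous_const.sub continuous_snd).smul continuous_const))
  -- the affine path
  have key : ∀ v : ℝ, (Complex.I * (t : ℂ)) • (H + (v : ℂ) • O) = A + (v - u) • B := by
    intro v
    rw [hsmul, hA, hB]
    push_cast
    module
  -- exact difference formula
  have hdiff : ∀ v : ℝ,
      exp ((Complex.I * (t : ℂ)) • (H + (v : ℂ) • O))
        - exp ((Complex.I * (t : ℂ)) • (H + (u : ℂ) • O))
      = (v - u) • g (v - u) := by
    intro v
    rw [key v, key u]
    simp only [sub_self, zero_smul, add_zero]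
    rw [exp_sub_exp (A + (v - u) • B) A]
    simp only [add_sub_cancel_left, mul_smul_comm, smul_mul_assoc,
      intervalIntegral.integral_smul]
    rfl
  -- derivative via slope
  have hder : HasDerivAt
      (fun v : ℝ => exp ((Complex.I * (t : ℂ)) • (H + (v : ℂ) • O))) (g 0) u := by
    rw [hasDerivAt_iff_tendsto_slope]
    have hslope : ∀ v : ℝ, v ≠ u → slope
        (fun v : ℝ => exp ((Complex.I * (t : ℂ)) • (H + (v : ℂ) • O))) u v
        = g (v - u) := by
      intro v hv
      rw [slope_def_module, hdiff v, smul_smul, inv_mul_cancel₀ (sub_ne_zero.2 hv), one_smul]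
    have h2 : Filter.Tendsto (fun v : ℝ => g (v - u)) (nhdsWithin u {u}ᶜ) (nhds (g 0)) := by
      apply Filter.Tendsto.mono_left _ nhdsWithin_le_nhds
      have : Filter.Tendsto (fun v : ℝ => v - u) (nhds u) (nhds 0) := by
        simpa using ((continuous_sub_right u).tendsto u)
      exact (hgc.tendsto 0).comp this
    refine h2.congr' ?_
    filter_upwards [self_mem_nhdsWithin] with v hv
    exact (hslope v hv).symm
  -- identify g 0 with the stated integral
  have hg0 : g 0 = (Complex.I * (t : ℂ)) • ∫ w in (0:ℝ)..1,
      exp ((Complex.I * (t : ℂ) * (w : ℂ)) • (H + (u : ℂ) • O)) * O *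
      exp ((Complex.I * (t : ℂ) * ((1 : ℂ) - (w : ℂ))) • (H + (u : ℂ) • O)) := by
    rw [hg, ← intervalIntegral.integral_smul]
    refine intervalIntegral.integral_congr fun w _ => ?_
    have e1 : w • (A + (0:ℝ) • B) = (Complex.I * (t : ℂ) * (w : ℂ)) • (H + (u : ℂ) • O) := by
      rw [zero_smul, add_zero, hsmul, hA, smul_smul]; ring_nf
    have e2 : (1 - w) • A = (Complex.I * (t : ℂ) * ((1:ℂ) - (w:ℂ))) • (H + (u : ℂ) • O) := by
      rw [hsmul, hA, smul_smul]; push_cast; ring_nf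
    rw [e1, e2, hB, mul_smul_comm, smul_mul_assoc]
  rw [hg0] at hder
  exact hder
end

section
/- Let H and O be Hermitian n×n complex matrices, let A be any n×n complex matrix, let B ∈ ℝ, and set H_B = H − B·O. Let g: ℝ → ℂ be measurable with ∫_ℝ |t|·|g(t)| dt < ∞ and ∫_ℝ |g(t)| dt < ∞. Then ‖∫_ℝ g(t)·(e^{itH_B} A e^{−itH_B} − e^{itH} A e^{−itH}) dt‖ ≤ 2|B|·‖O‖·‖A‖·∫_ℝ |t|·|g(t)| dt. In particular, the smeared Heisenberg evolution ∫_ℝ g(t) e^{itH_B} A e^{−itH_B} dt is Lipschitz continuous in the symmetry-breaking field B. -/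
open scoped Matrix.Norms.L2Operator

open Matrix in
/-- The L2 operator norm of the identity matrix is at most 1. -/
lemma aux_one_norm_le {n : ℕ} : ‖(1 : Matrix (Fin n) (Fin n) ℂ)‖ ≤ 1 := by
  have h := Matrix.l2_opNorm_conjTranspose_mul_self (1 : Matrix (Fin n) (Fin n) ℂ)
  simp at h
  nlinarith [norm_nonneg (1 : Matrix (Fin n) (Fin n) ℂ)]

open Matrix in
/-- `exp(i r M)` is unitary (hence norm ≤ 1) for Hermitian `M` and real `r`. -/
lemma aux_unitary_norm_le {n : ℕ} (M : Matrix (Fin n) (Fin n) ℂ) (hM : M.IsHermitian) (r : ℝ) :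
    ‖NormedSpace.exp ((Complex.I * (r : ℂ)) • M)‖ ≤ 1 := by
  set Z := (Complex.I * (r : ℂ)) • M with hZ
  have hskew : Z ∈ skewAdjoint (Matrix (Fin n) (Fin n) ℂ) := by
    rw [skewAdjoint.mem_iff, hZ, star_smul, Matrix.star_eq_conjTranspose, hM.eq, ← neg_smul]
    congr 1
    simp [Complex.ext_iff]
  have hu : NormedSpace.exp Z ∈ unitary (Matrix (Fin n) (Fin n) ℂ) :=
    by
      letI : NormedAlgebra ℚ (Matrix (Fin n) (Fin n) ℂ) := NormedAlgebra.restrictScalars ℚ ℂ _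
      exact NormedSpace.exp_mem_unitary_of_mem_skewAdjoint hskew
  have hmul : (NormedSpace.exp Z)ᴴ * NormedSpace.exp Z = 1 := by
    rw [← Matrix.star_eq_conjTranspose]
    exact (Unitary.mem_iff.mp hu).1
  have h := Matrix.l2_opNorm_conjTranspose_mul_self (NormedSpace.exp Z)
  rw [hmul] at h
  nlinarith [norm_nonneg (NormedSpace.exp Z), aux_one_norm_le (n := n)]

/-- Rewriting a real scalar multiple of `(i t) • M`. -/
lemma aux_smul_eq {n : ℕ} (M : Matrix (Fin n) (Fin n) ℂ) (s t : ℝ) :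
    s • ((Complex.I * (t : ℂ)) • M) = (Complex.I * ((s * t : ℝ) : ℂ)) • M := by
  rw [← smul_assoc]
  congr 1
  rw [Complex.real_smul]
  push_cast
  ring

/-- The real-exponential equals the complex one on complex matrices. -/
lemma aux_exp_eq {n : ℕ} (M : Matrix (Fin n) (Fin n) ℂ) :
    NormedSpace.exp M = NormedSpace.exp M := by
  rfl

/-- Duhamel-type estimate: `‖e^{itX} − e^{itY}‖ ≤ |t| ‖X − Y‖` for Hermitian `X, Y`. -/
lemma aux_duhamel {n : ℕ} (X Y : Matrix (Fin n) (Fin n) ℂ)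
    (hX : X.IsHermitian) (hY : Y.IsHermitian) (t : ℝ) :
    ‖NormedSpace.exp ((Complex.I * (t : ℂ)) • X) -
      NormedSpace.exp ((Complex.I * (t : ℂ)) • Y)‖ ≤
      ‖(Complex.I * (t : ℂ)) • X - (Complex.I * (t : ℂ)) • Y‖ := by
  set X' := (Complex.I * (t : ℂ)) • X with hX'
  set Y' := (Complex.I * (t : ℂ)) • Y with hY'
  set f : ℝ → Matrix (Fin n) (Fin n) ℂ :=
    fun s => NormedSpace.exp (s • X') * NormedSpace.exp ((1 - s) • Y') with hf
  set f' : ℝ → Matrix (Fin n) (Fin n) ℂ :=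
    fun s => NormedSpace.exp (s • X') * (X' - Y') * NormedSpace.exp ((1 - s) • Y') with hf'
  have hderiv : ∀ s : ℝ, HasDerivAt f (f' s) s := by
    intro s
    have h1 : HasDerivAt (fun u : ℝ => NormedSpace.exp (u • X'))
        (NormedSpace.exp (s • X') * X') s := by
      have := hasDerivAt_exp_smul_const (𝕂 := ℝ) X' s
      simpa [aux_exp_eq] using this
    have h2 : HasDerivAt (fun u : ℝ => NormedSpace.exp ((1 - u) • Y'))
        (-(Y' * NormedSpace.exp ((1 - s) • Y'))) s := by
      have hin : HasDerivAt (fun u : ℝ => 1 - u) (-1) s := by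
        simpa using (hasDerivAt_id s).const_sub (1 : ℝ)
      have hout : HasDerivAt (fun u : ℝ => NormedSpace.exp (u • Y'))
          (Y' * NormedSpace.exp ((1 - s) • Y')) (1 - s) := by
        have := hasDerivAt_exp_smul_const' (𝕂 := ℝ) Y' (1 - s)
        simpa [aux_exp_eq] using this
      have := HasDerivAt.scomp s hout hin
      rw [neg_one_smul] at this
      exact this
    have := h1.mul h2
    refine HasDerivAt.congr_deriv this ?_
    rw [hf']
    noncomm_ring
  have hcont : Continuous f' := by
    letI : NormedAlgebra ℚ (Matrix (Fin n) (Fin n) ℂ) := NormedAlgebra.restrictScalars ℚ ℂ _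
    have he1 : Continuous fun s : ℝ => NormedSpace.exp (s • X') :=
      NormedSpace.exp_continuous.comp (continuous_id.smul continuous_const)
    have he2 : Continuous fun s : ℝ => NormedSpace.exp ((1 - s) • Y') :=
      NormedSpace.exp_continuous.comp (((continuous_const.sub continuous_id).smul
        continuous_const))
    exact (he1.mul continuous_const).mul he2
  have hftc : ∫ s in (0 : ℝ)..1, f' s = f 1 - f 0 :=
    intervalIntegral.integral_eq_sub_of_hasDerivAt (fun s _ => hderiv s)
      (hcont.intervalIntegrable 0 1)
  have hbnd : ∀ s ∈ Set.uIoc (0 : ℝ) 1, ‖f' s‖ ≤ ‖X' - Y'‖ := by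
    intro s _
    rw [hf']
    calc ‖NormedSpace.exp (s • X') * (X' - Y') * NormedSpace.exp ((1 - s) • Y')‖
        ≤ ‖NormedSpace.exp (s • X') * (X' - Y')‖ * ‖NormedSpace.exp ((1 - s) • Y')‖ :=
          norm_mul_le _ _
      _ ≤ (‖NormedSpace.exp (s • X')‖ * ‖X' - Y'‖) * ‖NormedSpace.exp ((1 - s) • Y')‖ := by
          gcongr
          exact norm_mul_le _ _
      _ ≤ (1 * ‖X' - Y'‖) * 1 := by
          have hu1 : ‖NormedSpace.exp (s • X')‖ ≤ 1 := by
            rw [hX', aux_smul_eq]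
            exact aux_unitary_norm_le X hX _
          have hu2 : ‖NormedSpace.exp ((1 - s) • Y')‖ ≤ 1 := by
            rw [hY', aux_smul_eq]
            exact aux_unitary_norm_le Y hY _
          gcongr <;> positivity
      _ = ‖X' - Y'‖ := by ring
  have hle := intervalIntegral.norm_integral_le_of_norm_le_const hbnd
  rw [hftc] at hle
  have hfval : f 1 - f 0 = NormedSpace.exp X' - NormedSpace.exp Y' := by
    simp [hf]
  rw [hfval] at hle
  simpa using hle

open Matrix in
/-- Pointwise bound for the Heisenberg-evolution difference. -/
lemma aux_pointwise {n : ℕ} (H O A : Matrix (Fin n) (Fin n) ℂ)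
    (hH : H.IsHermitian) (hO : O.IsHermitian) (B : ℝ) (t : ℝ) :
    ‖NormedSpace.exp ((Complex.I * (t : ℂ)) • (H - (B : ℂ) • O)) * A *
        NormedSpace.exp (-(Complex.I * (t : ℂ)) • (H - (B : ℂ) • O))
      - NormedSpace.exp ((Complex.I * (t : ℂ)) • H) * A *
        NormedSpace.exp (-(Complex.I * (t : ℂ)) • H)‖
      ≤ 2 * |B| * ‖O‖ * ‖A‖ * |t| := by
  have hHB : (H - (B : ℂ) • O).IsHermitian := by
    rw [Matrix.IsHermitian, Matrix.conjTranspose_sub, Matrix.conjTranspose_smul, hH.eq, hO.eq]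
    congr 1
    simp [Complex.ext_iff]
  have hneg : ∀ (M : Matrix (Fin n) (Fin n) ℂ),
      -(Complex.I * (t : ℂ)) • M = (Complex.I * ((-t : ℝ) : ℂ)) • M := by
    intro M
    congr 1
    push_cast
    ring
  set U := NormedSpace.exp ((Complex.I * (t : ℂ)) • (H - (B : ℂ) • O)) with hU
  set V := NormedSpace.exp ((Complex.I * (t : ℂ)) • H) with hV
  set U' := NormedSpace.exp (-(Complex.I * (t : ℂ)) • (H - (B : ℂ) • O)) with hU'
  set V' := NormedSpace.exp (-(Complex.I * (t : ℂ)) • H) with hV'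
  have hdiffnorm : ∀ (r : ℝ), ‖(Complex.I * (r : ℂ)) • (H - (B : ℂ) • O) -
      (Complex.I * (r : ℂ)) • H‖ = |r| * (|B| * ‖O‖) := by
    intro r
    rw [← smul_sub, sub_sub_cancel_left, smul_neg, norm_neg, norm_smul, norm_smul]
    simp [_root_.map_mul]
  have hUV : ‖U - V‖ ≤ |t| * (|B| * ‖O‖) := by
    rw [hU, hV]
    refine le_trans (aux_duhamel _ _ hHB hH t) ?_
    rw [hdiffnorm t]
  have hU'V' : ‖U' - V'‖ ≤ |t| * (|B| * ‖O‖) := by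
    rw [hU', hV', hneg, hneg]
    refine le_trans (aux_duhamel _ _ hHB hH (-t)) ?_
    rw [hdiffnorm (-t)]
    simp
  have hUn : ‖U'‖ ≤ 1 := by
    rw [hU', hneg]
    exact aux_unitary_norm_le _ hHB _
  have hVn : ‖V‖ ≤ 1 := aux_unitary_norm_le _ hH _
  have hsplit : U * A * U' - V * A * V' = (U - V) * A * U' + V * A * (U' - V') := by
    noncomm_ring
  rw [hsplit]
  calc ‖(U - V) * A * U' + V * A * (U' - V')‖
      ≤ ‖(U - V) * A * U'‖ + ‖V * A * (U' - V')‖ := norm_add_le _ _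
    _ ≤ ‖U - V‖ * ‖A‖ * ‖U'‖ + ‖V‖ * ‖A‖ * ‖U' - V'‖ := by
        gcongr <;>
          exact le_trans (norm_mul_le _ _) (by gcongr; exact norm_mul_le _ _)
    _ ≤ (|t| * (|B| * ‖O‖)) * ‖A‖ * 1 + 1 * ‖A‖ * (|t| * (|B| * ‖O‖)) := by
        gcongr <;> positivity
    _ = 2 * |B| * ‖O‖ * ‖A‖ * |t| := by ring

/-- For Hermitian `n×n` matrices `H`, `O`, any matrix `A`, `B ∈ ℝ`,
`H_B = H − B·O`, and measurable `g : ℝ → ℂ` with `∫ |g| < ∞` and `∫ |t||g(t)| dt < ∞`,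
the smeared Heisenberg evolution is Lipschitz in the symmetry-breaking field `B`:
`‖∫ g(t)(e^{itH_B} A e^{−itH_B} − e^{itH} A e^{−itH}) dt‖ ≤ 2|B|‖O‖‖A‖ ∫ |t||g(t)| dt`. -/
theorem smeared_evolution_field_lipschitz {n : ℕ} (H O A : Matrix (Fin n) (Fin n) ℂ)
    (hH : H.IsHermitian) (hO : O.IsHermitian) (B : ℝ)
    (g : ℝ → ℂ) (hgm : Measurable g)
    (hg1 : MeasureTheory.Integrable g)
    (hg2 : MeasureTheory.Integrable (fun t : ℝ => |t| * ‖g t‖)) :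
    ‖∫ t : ℝ, g t •
        (NormedSpace.exp ((Complex.I * (t : ℂ)) • (H - (B : ℂ) • O)) * A *
            NormedSpace.exp (-(Complex.I * (t : ℂ)) • (H - (B : ℂ) • O))
          - NormedSpace.exp ((Complex.I * (t : ℂ)) • H) * A *
            NormedSpace.exp (-(Complex.I * (t : ℂ)) • H))‖
      ≤ 2 * |B| * ‖O‖ * ‖A‖ * ∫ t : ℝ, |t| * ‖g t‖ := by
  have hbound : MeasureTheory.Integrable
      (fun t : ℝ => 2 * |B| * ‖O‖ * ‖A‖ * (|t| * ‖g t‖)) := hg2.const_mul _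
  have hle := MeasureTheory.norm_integral_le_of_norm_le (μ := MeasureTheory.volume)
    (f := fun t : ℝ => g t •
        (NormedSpace.exp ((Complex.I * (t : ℂ)) • (H - (B : ℂ) • O)) * A *
            NormedSpace.exp (-(Complex.I * (t : ℂ)) • (H - (B : ℂ) • O))
          - NormedSpace.exp ((Complex.I * (t : ℂ)) • H) * A *
            NormedSpace.exp (-(Complex.I * (t : ℂ)) • H)))
    hbound ?_
  · refine hle.trans_eq ?_
    rw [MeasureTheory.integral_const_mul]
  · refine Filter.Eventually.of_forall fun t => ?_
    rw [norm_smul]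
    calc ‖g t‖ * ‖_‖ ≤ ‖g t‖ * (2 * |B| * ‖O‖ * ‖A‖ * |t|) := by
          gcongr
          exact aux_pointwise H O A hH hO B t
      _ = 2 * |B| * ‖O‖ * ‖A‖ * (|t| * ‖g t‖) := by ring
end

section
/- Let K be a positive semidefinite Hermitian operator on a finite-dimensional complex inner product space V, let P₀ be the orthogonal projection onto ker K, and let K⁺ be the Moore–Penrose pseudo-inverse of K (the operator that vanishes on ker K and inverts K on (ker K)ᗮ). Then for all u, v ∈ V: |⟨u, (1 − P₀)v⟩|² ≤ ⟨u, K⁺u⟩ · ⟨v, Kv⟩. -/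
lemma inner_specFun {V : Type*} [NormedAddCommGroup V] [InnerProductSpace ℂ V]
    {ι : Type*} [Fintype ι] (b : OrthonormalBasis ι ℂ V) (μ : ι → ℝ) (h : ℝ → ℂ) (u v : V) :
    (inner ℂ u (specFun b μ h v) : ℂ) = ∑ i, h (μ i) * ((inner ℂ u (b i) : ℂ) * (inner ℂ (b i) v : ℂ)) := by
  simp only [specFun, ContinuousLinearMap.sum_apply, ContinuousLinearMap.smul_apply,
    ContinuousLinearMap.smulRight_apply, innerSL_apply_apply, inner_sum, inner_smul_right]
  congr 1; ext i; ring

lemma key_sq {V : Type*} [NormedAddCommGroup V] [InnerProductSpace ℂ V]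
    {ι : Type*} [Fintype ι] (w : V) (b : OrthonormalBasis ι ℂ V) (i : ι) :
    (inner ℂ w (b i) : ℂ) * (inner ℂ (b i) w : ℂ) = ((‖(inner ℂ (b i) w : ℂ)‖ : ℝ) ^ 2 : ℝ) := by
  rw [← inner_conj_symm w (b i)]
  rw [Complex.conj_mul', Complex.ofReal_pow]

/-- For positive semidefinite Hermitian `K` (orthonormal eigenbasis `b`,
nonnegative eigenvalues `μ`), with `P₀` the orthogonal projection onto `ker K`
(functional calculus of the indicator of `{0}`) and `K⁺` the Moore–Penrose pseudo-inverse
(functional calculus of `λ ↦ λ⁻¹`, with `0⁻¹ = 0`), one has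
`|⟨u, (1 − P₀)v⟩|² ≤ ⟨u, K⁺u⟩ ⟨v, Kv⟩` for all `u, v`. -/
theorem offdiagonal_cauchy_schwarz_pseudoinverse
    {V : Type*} [NormedAddCommGroup V] [InnerProductSpace ℂ V] [FiniteDimensional ℂ V]
    {ι : Type*} [Fintype ι]
    (b : OrthonormalBasis ι ℂ V) (μ : ι → ℝ)
    (K : V →L[ℂ] V) (hK : ∀ i, K (b i) = (μ i : ℂ) • b i) (hμ : ∀ i, 0 ≤ μ i)
    (u v : V) :
    ‖(inner ℂ u (v - specFun b μ (fun x => if x = 0 then (1 : ℂ) else 0) v) : ℂ)‖ ^ 2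
      ≤ ((inner ℂ u (specFun b μ (fun x => ((x⁻¹ : ℝ) : ℂ)) u) : ℂ)).re *
        ((inner ℂ v (K v) : ℂ)).re := by
  classical
  set x : ι → ℝ := fun i => ‖(inner ℂ (b i) u : ℂ)‖ with hxdef
  set y : ι → ℝ := fun i => ‖(inner ℂ (b i) v : ℂ)‖ with hydef
  have hA : (inner ℂ u (v - specFun b μ (fun x => if x = 0 then (1:ℂ) else 0) v) : ℂ)
      = ∑ i, (if μ i = 0 then 0 else (inner ℂ u (b i) : ℂ) * (inner ℂ (b i) v : ℂ)) := by
    rw [inner_sub_right, inner_specFun, ← b.sum_inner_mul_inner u v, ← Finset.sum_sub_distrib]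
    refine Finset.sum_congr rfl fun i _ => ?_
    by_cases h : μ i = 0 <;> simp [h]
  have hB : ((inner ℂ u (specFun b μ (fun x => ((x⁻¹ : ℝ) : ℂ)) u) : ℂ)).re
      = ∑ i, (μ i)⁻¹ * x i ^ 2 := by
    rw [inner_specFun]
    rw [Complex.re_sum]
    refine Finset.sum_congr rfl fun i _ => ?_
    rw [key_sq u b i, ← Complex.ofReal_mul, Complex.ofReal_re]
  have hKv : K v = ∑ i, (inner ℂ (b i) v : ℂ) • ((μ i : ℂ) • b i) := by
    conv_lhs => rw [← b.sum_repr' v]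
    rw [map_sum]
    simp [hK]
  have hC : ((inner ℂ v (K v) : ℂ)).re = ∑ i, μ i * y i ^ 2 := by
    rw [hKv, inner_sum]
    rw [Complex.re_sum]
    refine Finset.sum_congr rfl fun i _ => ?_
    rw [inner_smul_right, inner_smul_right]
    have : (inner ℂ (b i) v : ℂ) * ((μ i : ℂ) * (inner ℂ v (b i) : ℂ))
        = (μ i : ℂ) * ((inner ℂ v (b i) : ℂ) * (inner ℂ (b i) v : ℂ)) := by ring
    rw [this, key_sq v b i, ← Complex.ofReal_mul, Complex.ofReal_re]
  have habs : ‖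
      (inner ℂ u (v - specFun b μ (fun x => if x = 0 then (1:ℂ) else 0) v) : ℂ)‖
      ≤ ∑ i, (if μ i = 0 then 0 else x i * y i) := by
    rw [hA]
    refine (norm_sum_le _ _).trans_eq ?_
    refine Finset.sum_congr rfl fun i _ => ?_
    by_cases h : μ i = 0
    · simp [h]
    · simp only [h, if_false, norm_mul]
      rw [norm_inner_symm u (b i)]
  set X : ι → ℝ := fun i => if μ i = 0 then 0 else (Real.sqrt (μ i))⁻¹ * x i with hX
  set Y : ι → ℝ := fun i => Real.sqrt (μ i) * y i with hY
  have hXY : ∀ i, X i * Y i = (if μ i = 0 then 0 else x i * y i) := by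
    intro i
    by_cases h : μ i = 0
    · simp [hX, hY, h]
    · have hpos : 0 < μ i := lt_of_le_of_ne (hμ i) (Ne.symm h)
      have hs : Real.sqrt (μ i) ≠ 0 := by positivity
      simp only [hX, hY, h, if_false]
      field_simp
  have hX2 : ∀ i, X i ^ 2 = (μ i)⁻¹ * x i ^ 2 := by
    intro i
    by_cases h : μ i = 0
    · simp [hX, h]
    · simp only [hX, h, if_false, mul_pow, inv_pow, Real.sq_sqrt (hμ i)]
  have hY2 : ∀ i, Y i ^ 2 = μ i * y i ^ 2 := by
    intro i
    simp only [hY, mul_pow, Real.sq_sqrt (hμ i)]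
  have hsumnn : 0 ≤ ∑ i, (if μ i = 0 then 0 else x i * y i) := by
    refine Finset.sum_nonneg fun i _ => ?_
    by_cases h : μ i = 0 <;> simp [h]
    positivity
  calc ‖(inner ℂ u (v - specFun b μ (fun x => if x = 0 then (1:ℂ) else 0) v) : ℂ)‖ ^ 2
      ≤ (∑ i, (if μ i = 0 then 0 else x i * y i)) ^ 2 := by
        exact pow_le_pow_left₀ (norm_nonneg _) habs 2
    _ = (∑ i, X i * Y i) ^ 2 := by simp_rw [hXY]
    _ ≤ (∑ i, X i ^ 2) * (∑ i, Y i ^ 2) := Finset.sum_mul_sq_le_sq_mul_sq _ _ _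
    _ = ((inner ℂ u (specFun b μ (fun x => ((x⁻¹ : ℝ) : ℂ)) u) : ℂ)).re *
        ((inner ℂ v (K v) : ℂ)).re := by
        rw [hB, hC]
        simp_rw [hX2, hY2]
end

section
/- Let d ≥ 2 be an integer. Then the function k ↦ (d + Σ_{i=1}^d cos k^{(i)})^{−1/2} is Lebesgue integrable on the cube [−π, π]^d; equivalently, with 𝓔_k = d − Σ_{i=1}^d cos k^{(i)} and Q = (π, π, …, π), the integral ∫_{[−π,π]^d} 𝓔_{k+Q}^{−1/2} dk is finite. -/
open MeasureTheory Real Set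

/-- `x ↦ x ^ c` (real rpow) is measurable for any fixed exponent. -/
lemma measurable_rpow_const' (c : ℝ) : Measurable fun x : ℝ => x ^ c := by
  have h : (fun x : ℝ => x ^ c) = fun x =>
      if x = 0 then (if c = 0 then 1 else 0)
      else Real.exp (Real.log x * c) * (if x < 0 then Real.cos (c * π) else 1) := by
    funext x
    rcases lt_trichotomy x 0 with h | h | h
    · rw [Real.rpow_def_of_neg h]
      simp [h.ne, h]
    · subst h
      rcases eq_or_ne c 0 with rfl | hc
      · simp
      · simp [Real.zero_rpow hc, hc]
    · rw [Real.rpow_def_of_pos h]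
      simp [h.ne', not_lt.2 h.le]
  rw [h]
  exact Measurable.ite (measurableSet_eq_fun measurable_id measurable_const)
    measurable_const
    ((Real.measurable_exp.comp (Real.measurable_log.mul_const c)).mul
      (Measurable.ite (measurableSet_lt measurable_id measurable_const)
        measurable_const measurable_const))

/-- Pointwise bound: `(1 + cos x)^{-1/4} ≤ π (π - |x|)^{-1/2}` on `[-π, π]`. -/
lemma one_add_cos_rpow_bound {x : ℝ} (hx : x ∈ Set.Icc (-π) π) :
    (1 + Real.cos x) ^ (-(1 / 4 : ℝ)) ≤ π * (π - |x|) ^ (-(1 / 2 : ℝ)) := by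
  have habs : |x| ≤ π := abs_le.2 ⟨hx.1, hx.2⟩
  set t : ℝ := π - |x| with hdef
  have ht0 : 0 ≤ t := by simp only [hdef, sub_nonneg]; exact habs
  have htπ : t ≤ π := by
    have h := abs_nonneg x
    simp only [hdef]; linarith
  have hcos : 1 + Real.cos x = 2 * Real.sin (t / 2) ^ 2 := by
    have h1 : Real.cos x = Real.cos |x| := (Real.cos_abs x).symm
    have h2 : |x| = π - t := by simp [hdef]
    have h3 : Real.cos (π - t) = -Real.cos t := Real.cos_pi_sub t
    have h4 : Real.sin (t / 2) ^ 2 = 1 / 2 - Real.cos (2 * (t / 2)) / 2 :=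
      Real.sin_sq_eq_half_sub (t / 2)
    have h5 : 2 * (t / 2) = t := by ring
    rw [h1, h2, h3, h4, h5]; ring
  rcases eq_or_lt_of_le ht0 with h0 | h0
  · have hz : 1 + Real.cos x = 0 := by rw [hcos, ← h0]; simp
    rw [hz, ← h0, Real.zero_rpow (by norm_num), Real.zero_rpow (by norm_num), mul_zero]
  · -- t > 0
    have hsin : t / π ≤ Real.sin (t / 2) := by
      have := Real.mul_le_sin (x := t / 2) (by positivity) (by linarith)
      calc t / π = 2 / π * (t / 2) := by ring
        _ ≤ Real.sin (t / 2) := this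
    have hsin0 : (0 : ℝ) ≤ t / π := by positivity
    have hlb : 2 * (t / π) ^ 2 ≤ 1 + Real.cos x := by
      rw [hcos]
      have h1 : (t / π) ^ 2 ≤ Real.sin (t / 2) ^ 2 := by
        apply pow_le_pow_left₀ hsin0 hsin
      linarith
    have hA0 : (0 : ℝ) < 2 * (t / π) ^ 2 := by positivity
    have step1 : (1 + Real.cos x) ^ (-(1 / 4 : ℝ)) ≤ (2 * (t / π) ^ 2) ^ (-(1 / 4 : ℝ)) :=
      Real.rpow_le_rpow_of_nonpos hA0 hlb (by norm_num)
    have step2 : (2 * (t / π) ^ 2) ^ (-(1 / 4 : ℝ))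
        = 2 ^ (-(1 / 4 : ℝ)) * (t / π) ^ (-(1 / 2 : ℝ)) := by
      rw [Real.mul_rpow (by norm_num) (by positivity)]
      congr 1
      rw [← Real.rpow_natCast (t / π) 2, ← Real.rpow_mul hsin0]
      norm_num
    have step3 : (t / π) ^ (-(1 / 2 : ℝ)) = t ^ (-(1 / 2 : ℝ)) * π ^ ((1 / 2 : ℝ)) := by
      rw [Real.div_rpow ht0 Real.pi_pos.le, Real.rpow_neg Real.pi_pos.le]
      field_simp
    have hπ1 : (1 : ℝ) ≤ π := by linarith [Real.pi_gt_three]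
    have h2le1 : (2 : ℝ) ^ (-(1 / 4 : ℝ)) ≤ 1 :=
      Real.rpow_le_one_of_one_le_of_nonpos one_le_two (by norm_num)
    have hsqrtπ : π ^ ((1 / 2 : ℝ)) ≤ π := by
      calc π ^ ((1 / 2 : ℝ)) ≤ π ^ (1 : ℝ) :=
            Real.rpow_le_rpow_of_exponent_le hπ1 (by norm_num)
        _ = π := Real.rpow_one π
    have h2pos : (0 : ℝ) ≤ 2 ^ (-(1 / 4 : ℝ)) := Real.rpow_nonneg (by norm_num) _
    have htpos : (0 : ℝ) ≤ t ^ (-(1 / 2 : ℝ)) := Real.rpow_nonneg ht0 _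
    have hπh : (0 : ℝ) ≤ π ^ ((1 / 2 : ℝ)) := Real.rpow_nonneg Real.pi_pos.le _
    calc (1 + Real.cos x) ^ (-(1 / 4 : ℝ))
        ≤ 2 ^ (-(1 / 4 : ℝ)) * (t ^ (-(1 / 2 : ℝ)) * π ^ ((1 / 2 : ℝ))) := by
          rw [← step3, ← step2]; exact step1
      _ ≤ π * t ^ (-(1 / 2 : ℝ)) := by
          nlinarith [mul_le_mul_of_nonneg_left hsqrtπ htpos,
            mul_le_mul_of_nonneg_right h2le1 (mul_nonneg htpos hπh)]

/-- `(π - |x|)^{-1/2}` is integrable on `[-π, π]`. -/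
lemma integrable_aux : IntegrableOn (fun x : ℝ => (π - |x|) ^ (-(1 / 2 : ℝ)))
    (Set.Icc (-π) π) := by
  have hbase : IntervalIntegrable (fun x : ℝ => x ^ (-(1 / 2 : ℝ))) volume 0 π :=
    intervalIntegral.intervalIntegrable_rpow' (by norm_num)
  have h1 : IntegrableOn (fun x : ℝ => (π - |x|) ^ (-(1 / 2 : ℝ))) (Set.Icc 0 π) := by
    have h := hbase.comp_sub_left π
    simp only [sub_zero, sub_self] at h
    have h' : IntegrableOn (fun x : ℝ => (π - x) ^ (-(1 / 2 : ℝ))) (Set.Icc 0 π) := by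
      rw [← intervalIntegrable_iff_integrableOn_Icc_of_le Real.pi_pos.le]
      exact h.symm
    apply h'.congr_fun ?_ measurableSet_Icc
    intro x hx
    simp only [abs_of_nonneg hx.1]
  have h2 : IntegrableOn (fun x : ℝ => (π - |x|) ^ (-(1 / 2 : ℝ))) (Set.Icc (-π) 0) := by
    have h := hbase.comp_add_left π
    simp only [zero_sub, sub_self] at h
    have h' : IntegrableOn (fun x : ℝ => (π + x) ^ (-(1 / 2 : ℝ))) (Set.Icc (-π) 0) := by
      rw [← intervalIntegrable_iff_integrableOn_Icc_of_le (by linarith [Real.pi_pos])]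
      exact h
    apply h'.congr_fun ?_ measurableSet_Icc
    intro x hx
    simp only [abs_of_nonpos hx.2]
    ring_nf
  have := h2.union h1
  rwa [Set.Icc_union_Icc_eq_Icc (by linarith [Real.pi_pos]) Real.pi_pos.le] at this

/-- The 1D factor `(1 + cos x)^{-1/4}` is integrable on `[-π, π]` (as an indicator). -/
lemma integrable_one_dim :
    Integrable ((Set.Icc (-π) π).indicator fun x : ℝ => (1 + Real.cos x) ^ (-(1 / 4 : ℝ))) := by
  rw [integrable_indicator_iff measurableSet_Icc]
  apply Integrable.mono' (g := fun x => π * (π - |x|) ^ (-(1 / 2 : ℝ)))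
    (integrable_aux.const_mul π)
  · exact ((measurable_rpow_const' (-(1 / 4 : ℝ))).comp
      (measurable_const.add Real.measurable_cos)).aestronglyMeasurable
  · filter_upwards [ae_restrict_mem measurableSet_Icc] with x hx
    have hb : (0 : ℝ) ≤ 1 + Real.cos x := by linarith [Real.neg_one_le_cos x]
    rw [Real.norm_eq_abs, abs_of_nonneg (Real.rpow_nonneg hb _)]
    exact one_add_cos_rpow_bound hx

/-- For `d ≥ 2` the function `k ↦ (d + Σᵢ cos k⁽ⁱ⁾)^{−1/2}`, i.e.
`𝓔_{k+Q}^{−1/2}` with `Q = (π,…,π)`, is Lebesgue integrable on the cube `[−π, π]^d`. -/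
theorem inverse_sqrt_dispersion_integrable (d : ℕ) (hd : 2 ≤ d) :
    MeasureTheory.IntegrableOn
      (fun k : Fin d → ℝ => ((d : ℝ) + ∑ i, Real.cos (k i)) ^ (-(1 / 2 : ℝ)))
      (Set.univ.pi fun _ : Fin d => Set.Icc (-Real.pi) Real.pi) := by
  have hS : MeasurableSet (Set.univ.pi fun _ : Fin d => Set.Icc (-π) π) :=
    MeasurableSet.univ_pi fun _ => measurableSet_Icc
  rw [← integrable_indicator_iff hS]
  set i0 : Fin d := ⟨0, by omega⟩ with hi0
  set i1 : Fin d := ⟨1, by omega⟩ with hi1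
  have hne : i0 ≠ i1 := by simp [hi0, hi1, Fin.ext_iff]
  set g : Fin d → ℝ → ℝ := fun i =>
    (Set.Icc (-π) π).indicator
      (fun x => if (i : ℕ) < 2 then (1 + Real.cos x) ^ (-(1 / 4 : ℝ)) else 1) with hg
  have hgint : ∀ i, Integrable (g i) := by
    intro i
    by_cases h : (i : ℕ) < 2
    · simp only [hg, if_pos h]; exact integrable_one_dim
    · simp only [hg, h, if_false]
      rw [integrable_indicator_iff measurableSet_Icc]
      exact integrableOn_const measure_Icc_lt_top.ne (by simp)
  have hG : Integrable (fun k : Fin d → ℝ => (2 : ℝ) ^ (-(1 / 2 : ℝ)) * ∏ i, g i (k i)) :=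
    (Integrable.fintype_prod hgint).const_mul _
  -- nonnegativity of each factor
  have hgnn : ∀ i (x : ℝ), 0 ≤ g i x := by
    intro i x
    apply Set.indicator_nonneg
    intro y _
    split
    · exact Real.rpow_nonneg (by linarith [Real.neg_one_le_cos y]) _
    · norm_num
  apply hG.mono'
  · apply Measurable.aestronglyMeasurable
    apply Measurable.indicator ?_ hS
    exact (measurable_rpow_const' (-(1 / 2 : ℝ))).comp
      (measurable_const.add (Finset.measurable_sum _ fun i _ =>
        Real.measurable_cos.comp (measurable_pi_apply i)))
  · -- a.e. bound
    have hvol : (volume : Measure (Fin d → ℝ)) = Measure.pi fun _ => volume := rfl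
    have hae : ∀ (i : Fin d) (c : ℝ), ∀ᵐ k : Fin d → ℝ, k i ≠ c := by
      intro i c
      rw [hvol]
      exact MeasureTheory.Measure.ae_eval_ne (fun _ : Fin d => (volume : Measure ℝ)) i c
    filter_upwards [hae i0 π, hae i0 (-π), hae i1 π, hae i1 (-π)]
      with k h0p h0m h1p h1m
    by_cases hk : k ∈ Set.univ.pi fun _ : Fin d => Set.Icc (-π) π
    · rw [Set.indicator_of_mem hk]
      set a : ℝ := 1 + Real.cos (k i0) with ha
      set b : ℝ := 1 + Real.cos (k i1) with hb
      have hcos_pos : ∀ (i : Fin d), k i ≠ π → k i ≠ -π → 0 < 1 + Real.cos (k i) := by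
        intro i hp hm
        have hmem : k i ∈ Set.Icc (-π) π := hk i (Set.mem_univ i)
        have habs : |k i| < π := by
          rw [abs_lt]
          exact ⟨lt_of_le_of_ne hmem.1 (fun h => hm h.symm), lt_of_le_of_ne hmem.2 hp⟩
        have : Real.cos (k i) ≠ -1 := by
          intro hc
          have h1 : Real.cos |k i| = Real.cos π := by
            rw [Real.cos_abs, hc, Real.cos_pi]
          have h2 : |k i| = π := Real.injOn_cos ⟨abs_nonneg _, habs.le⟩
            ⟨Real.pi_pos.le, le_rfl⟩ h1
          exact habs.ne h2
        rcases (Real.neg_one_le_cos (k i)).lt_or_eq with h | h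
        · linarith
        · exact absurd h.symm this
      have hA : 0 < a := hcos_pos i0 h0p h0m
      have hB : 0 < b := hcos_pos i1 h1p h1m
      -- sum bound
      have hsum : a + b ≤ (d : ℝ) + ∑ i, Real.cos (k i) := by
        have heq : (d : ℝ) + ∑ i, Real.cos (k i) = ∑ i, (1 + Real.cos (k i)) := by
          rw [Finset.sum_add_distrib, Finset.sum_const, Finset.card_univ, Fintype.card_fin]
          simp
        rw [heq]
        have hsub : ({i0, i1} : Finset (Fin d)) ⊆ Finset.univ := Finset.subset_univ _
        have hmono := Finset.sum_le_sum_of_subset_of_nonneg hsub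
          (fun i _ _ => by show (0:ℝ) ≤ 1 + Real.cos (k i); linarith [Real.neg_one_le_cos (k i)])
        calc a + b = ∑ i ∈ ({i0, i1} : Finset (Fin d)), (1 + Real.cos (k i)) :=
              (Finset.sum_pair (f := fun i => 1 + Real.cos (k i)) hne).symm
          _ ≤ _ := hmono
      -- AM-GM
      have hamgm : 2 * (a * b) ^ ((1 / 2 : ℝ)) ≤ a + b := by
        rw [← Real.sqrt_eq_rpow, Real.sqrt_mul hA.le]
        nlinarith [sq_nonneg (Real.sqrt a - Real.sqrt b), Real.sq_sqrt hA.le,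
          Real.sq_sqrt hB.le, Real.sqrt_nonneg a, Real.sqrt_nonneg b]
      have hgm_pos : (0 : ℝ) < 2 * (a * b) ^ ((1 / 2 : ℝ)) := by positivity
      -- product value
      have hprod : ∏ i, g i (k i) = a ^ (-(1 / 4 : ℝ)) * b ^ (-(1 / 4 : ℝ)) := by
        have hp : ∀ i : Fin d, g i (k i)
            = if (i : ℕ) < 2 then (1 + Real.cos (k i)) ^ (-(1 / 4 : ℝ)) else 1 := fun i =>
          Set.indicator_of_mem (hk i (Set.mem_univ i)) _
        rw [← Finset.prod_subset (Finset.subset_univ ({i0, i1} : Finset (Fin d)))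
          (fun i _ hi => by
            rw [hp]
            have h0 : i ≠ i0 := fun h => hi (by simp [h])
            have h1 : i ≠ i1 := fun h => hi (by simp [h])
            have : ¬ ((i : ℕ) < 2) := by
              intro hlt
              interval_cases h : (i : ℕ)
              · exact h0 (Fin.ext h)
              · exact h1 (Fin.ext h)
            simp [this])]
        rw [Finset.prod_pair hne, hp, hp]
        simp [hi0, hi1, ha, hb]
      rw [hprod]
      -- main estimate
      have hbase_nn : (0 : ℝ) ≤ (d : ℝ) + ∑ i, Real.cos (k i) := by linarith
      rw [Real.norm_eq_abs, abs_of_nonneg (Real.rpow_nonneg hbase_nn _)]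
      calc ((d : ℝ) + ∑ i, Real.cos (k i)) ^ (-(1 / 2 : ℝ))
          ≤ (2 * (a * b) ^ ((1 / 2 : ℝ))) ^ (-(1 / 2 : ℝ)) :=
            Real.rpow_le_rpow_of_nonpos hgm_pos (hamgm.trans hsum) (by norm_num)
        _ = 2 ^ (-(1 / 2 : ℝ)) * (a ^ (-(1 / 4 : ℝ)) * b ^ (-(1 / 4 : ℝ))) := by
            rw [Real.mul_rpow (by norm_num) (Real.rpow_nonneg (by positivity) _),
              ← Real.rpow_mul (by positivity)]
            norm_num
            rw [Real.mul_rpow hA.le hB.le]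
    · rw [Set.indicator_of_notMem hk]
      simp only [norm_zero]
      exact mul_nonneg (Real.rpow_nonneg (by norm_num) _)
        (Finset.prod_nonneg fun i _ => hgnn i (k i))
end

section
/- Let d ≥ 2 be an integer. There exists a constant C = C(d) > 0 such that for every positive integer L, with the discrete momentum set K_L = {πn/L : n ∈ ℤ, −L < n ≤ L}^d and Q = (π, π, …, π): (2L)^{−d} · Σ_{k ∈ K_L, k ≠ Q} (d + Σ_{i=1}^d cos k^{(i)})^{−1/2} ≤ C. That is, the Riemann sums of 𝓔_{k+Q}^{−1/2} over the discrete Brillouin zone, omitting the singular momentum Q, are bounded uniformly in the system size L. -/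
open Finset Real

/-- 1-D sum comparison: `∑_{m=1}^{M} m^{-s} ≤ M^{1-s}/(1-s)` for `0 ≤ s < 1`. -/
lemma aux_sum_rpow_neg_le (s : ℝ) (hs0 : 0 ≤ s) (hs1 : s < 1) (M : ℕ) :
    ∑ m ∈ Finset.Icc 1 M, (m : ℝ) ^ (-s) ≤ (M : ℝ) ^ (1 - s) / (1 - s) := by
  have hp0 : (0:ℝ) < 1 - s := by linarith
  induction M with
  | zero => simp [Real.zero_rpow (ne_of_gt hp0)]
  | succ M ih =>
    rw [Finset.sum_Icc_succ_top (by omega)]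
    have hM1 : (0:ℝ) < (M:ℝ) + 1 := by positivity
    have hb := rpow_one_add_le_one_add_mul_self
      (s := -(1/((M:ℝ)+1))) (p := 1 - s)
      (by rw [neg_le, neg_neg, div_le_one hM1]; linarith) (le_of_lt hp0) (by linarith)
    have h1x : (1 : ℝ) + -(1/((M:ℝ)+1)) = (M:ℝ)/((M:ℝ)+1) := by field_simp; ring
    rw [h1x] at hb
    have hdiv : ((M:ℝ)/((M:ℝ)+1)) ^ (1-s) = (M:ℝ)^(1-s) / ((M:ℝ)+1)^(1-s) :=
      Real.div_rpow (by positivity) (le_of_lt hM1) _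
    rw [hdiv] at hb
    have hpow : ((M:ℝ)+1) ^ (-s) = ((M:ℝ)+1) ^ (1-s) / (((M:ℝ)+1)) := by
      rw [show -s = (1-s)-1 by ring, Real.rpow_sub hM1, Real.rpow_one]
    have hBpos : (0:ℝ) < ((M:ℝ)+1)^(1-s) := Real.rpow_pos_of_pos hM1 _
    -- from hb: M^(1-s) ≤ (M+1)^(1-s) - (1-s)*(M+1)^(1-s)/(M+1)
    have hb' : (M:ℝ)^(1-s) ≤ ((M:ℝ)+1)^(1-s) - (1-s) * (((M:ℝ)+1)^(1-s) / ((M:ℝ)+1)) := by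
      have := mul_le_mul_of_nonneg_right hb (le_of_lt hBpos)
      rw [div_mul_cancel₀ _ (ne_of_gt hBpos)] at this
      calc (M:ℝ)^(1-s) ≤ (1 + (1-s) * -(1/((M:ℝ)+1))) * ((M:ℝ)+1)^(1-s) := this
        _ = ((M:ℝ)+1)^(1-s) - (1-s) * (((M:ℝ)+1)^(1-s) / ((M:ℝ)+1)) := by ring
    have hstep : (((M:ℕ):ℝ)+1) ^ (-s) ≤ (((M:ℝ)+1)^(1-s) - (M:ℝ)^(1-s)) / (1-s) := by
      rw [hpow, le_div_iff₀ hp0]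
      nlinarith [hb']
    have hcast : ((M+1:ℕ):ℝ) = (M:ℝ) + 1 := by push_cast; ring
    rw [hcast]
    calc (∑ m ∈ Finset.Icc 1 M, (m : ℝ) ^ (-s)) + ((M:ℝ)+1) ^ (-s)
        ≤ (M : ℝ) ^ (1 - s) / (1 - s) + (((M:ℝ)+1)^(1-s) - (M:ℝ)^(1-s)) / (1-s) := by
          exact add_le_add ih hstep
      _ = ((M:ℝ)+1) ^ (1 - s) / (1 - s) := by ring

/-- The basic trigonometric bound: `1 + cos(πn/L) ≥ 2 ((L-|n|)/L)²`. -/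
lemma aux_cos_bound (L : ℕ) (hL : 0 < L) (n : ℤ) (h1 : -(L:ℤ) < n) (h2 : n ≤ L) :
    2 * ((((L:ℤ) - |n| : ℤ) : ℝ) / (L:ℝ))^2 ≤ 1 + Real.cos (Real.pi * (n:ℝ) / (L:ℝ)) := by
  have hLR : (0:ℝ) < (L:ℝ) := by exact_mod_cast hL
  have habs : |n| ≤ (L:ℤ) := abs_le.mpr ⟨by omega, h2⟩
  have habs0 : (0:ℤ) ≤ |n| := abs_nonneg n
  set δ : ℝ := (((L:ℤ) - |n| : ℤ) : ℝ) with hδ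
  have hδ0 : 0 ≤ δ := by rw [hδ]; exact_mod_cast sub_nonneg.mpr habs
  have hδL : δ ≤ (L:ℝ) := by
    rw [hδ]
    have h : ((L:ℤ) - |n|) ≤ (L:ℤ) := by have := abs_nonneg n; omega
    exact_mod_cast h
  set θ : ℝ := Real.pi * (n:ℝ) / (L:ℝ) with hθ
  -- cos (θ/2) ≥ δ / L
  have hkey : δ / (L:ℝ) ≤ Real.cos (θ/2) := by
    have habsθ : |θ/2| = Real.pi * |(n:ℝ)| / (2*(L:ℝ)) := by
      rw [hθ, abs_div, abs_div, abs_mul, abs_of_nonneg Real.pi_pos.le,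
        abs_of_nonneg hLR.le, abs_two]
      ring
    have heq : Real.cos (θ/2) = Real.sin (Real.pi * δ / (2*(L:ℝ))) := by
      rw [← Real.cos_abs, habsθ, ← Real.sin_pi_div_two_sub]
      congr 1
      have hc : |(n:ℝ)| = (L:ℝ) - δ := by
        rw [hδ]; push_cast; ring
      rw [hc]; field_simp; ring
    rw [heq]
    have hy0 : 0 ≤ Real.pi * δ / (2*(L:ℝ)) := by positivity
    have hy1 : Real.pi * δ / (2*(L:ℝ)) ≤ Real.pi / 2 := by
      rw [div_le_div_iff₀ (by positivity) (by norm_num)]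
      nlinarith [Real.pi_pos]
    have := Real.mul_le_sin hy0 hy1
    calc δ / (L:ℝ) = 2 / Real.pi * (Real.pi * δ / (2*(L:ℝ))) := by
          field_simp
      _ ≤ Real.sin (Real.pi * δ / (2*(L:ℝ))) := this
  have hcos2 : 1 + Real.cos θ = 2 * Real.cos (θ/2)^2 := by
    have := Real.cos_sq (θ/2)
    rw [show 2 * (θ/2) = θ by ring] at this
    rw [this]; ring
  rw [hcos2]
  have := pow_le_pow_left₀ (div_nonneg hδ0 hLR.le) hkey 2
  nlinarith [this]

/-- Per-term bound. -/
lemma aux_term_le (d L : ℕ) (hd : 2 ≤ d) (hL : 0 < L) (nvec : Fin d → ℤ)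
    (hmem : ∀ i, nvec i ∈ Finset.Ioc (-(L:ℤ)) (L:ℤ)) (hne : nvec ≠ fun _ => (L:ℤ)) :
    ((d : ℝ) + ∑ i, Real.cos (Real.pi * (nvec i : ℝ) / (L : ℝ))) ^ (-(1 / 2 : ℝ))
      ≤ Real.sqrt 2 * (L:ℝ) *
        ∏ i, (((L:ℤ) - |nvec i| + 1 : ℤ) : ℝ) ^ (-(1/(d:ℝ))) := by
  have hLR : (0:ℝ) < (L:ℝ) := by exact_mod_cast hL
  have hdR : (0:ℝ) < (d:ℝ) := by positivity
  -- minimizing |nvec i|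
  obtain ⟨j, -, hjmin⟩ := Finset.exists_min_image Finset.univ (fun i => |nvec i|)
    ⟨⟨0, by omega⟩, Finset.mem_univ _⟩
  obtain ⟨k, hk⟩ : ∃ k, nvec k ≠ (L:ℤ) := by
    by_contra h; push_neg at h; exact hne (funext h)
  have hmemk := hmem k
  rw [Finset.mem_Ioc] at hmemk
  have hkabs : |nvec k| ≤ (L:ℤ) - 1 := by
    rcases abs_le.mpr ⟨by omega, hmemk.2⟩ |>.lt_or_eq with h | h
    · omega
    · exfalso; rcases abs_eq (by omega : (0:ℤ) ≤ L) |>.mp h with h' | h' <;> omega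
  have hjabs : |nvec j| ≤ (L:ℤ) - 1 := le_trans (hjmin k (Finset.mem_univ k)) hkabs
  set δj : ℝ := (((L:ℤ) - |nvec j| : ℤ) : ℝ) with hδj
  have hδj1 : (1:ℝ) ≤ δj := by rw [hδj]; exact_mod_cast by omega
  have hδj0 : (0:ℝ) < δj := lt_of_lt_of_le one_pos hδj1
  -- energy lower bound
  set E : ℝ := (d : ℝ) + ∑ i, Real.cos (Real.pi * (nvec i : ℝ) / (L : ℝ)) with hE
  have hEsum : E = ∑ i : Fin d, (1 + Real.cos (Real.pi * (nvec i : ℝ) / (L : ℝ))) := by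
    rw [hE, Finset.sum_add_distrib]
    simp [Finset.card_univ]
  have hElow : 2 * (δj / (L:ℝ))^2 ≤ E := by
    rw [hEsum]
    have hj' := hmem j; rw [Finset.mem_Ioc] at hj'
    calc 2 * (δj / (L:ℝ))^2 ≤ 1 + Real.cos (Real.pi * (nvec j : ℝ) / (L : ℝ)) :=
          aux_cos_bound L hL (nvec j) hj'.1 hj'.2
      _ ≤ ∑ i : Fin d, (1 + Real.cos (Real.pi * (nvec i : ℝ) / (L : ℝ))) := by
          apply Finset.single_le_sum (f := fun i => 1 + Real.cos (Real.pi * (nvec i : ℝ) / (L : ℝ)))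
            (fun i _ => by nlinarith [Real.neg_one_le_cos (Real.pi * (nvec i : ℝ) / (L : ℝ))])
            (Finset.mem_univ j)
  have hx0 : (0:ℝ) < Real.sqrt 2 * (δj / (L:ℝ)) := by
    have := Real.sqrt_pos.mpr (by norm_num : (0:ℝ) < 2)
    positivity
  have hpos : (0:ℝ) < 2 * (δj / (L:ℝ))^2 := by positivity
  have h1 : E ^ (-(1/2:ℝ)) ≤ (2 * (δj / (L:ℝ))^2) ^ (-(1/2:ℝ)) :=
    Real.rpow_le_rpow_of_nonpos hpos hElow (by norm_num)
  have h2 : (2 * (δj / (L:ℝ))^2) ^ (-(1/2:ℝ)) = (Real.sqrt 2 * (δj / (L:ℝ)))⁻¹ := by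
    have hsq : 2 * (δj / (L:ℝ))^2 = (Real.sqrt 2 * (δj / (L:ℝ)))^2 := by
      rw [mul_pow, Real.sq_sqrt (by norm_num : (0:ℝ) ≤ 2)]
    rw [hsq, ← Real.rpow_natCast (Real.sqrt 2 * (δj / (L:ℝ))) 2, ← Real.rpow_mul hx0.le,
      show ((2:ℕ):ℝ) * -(1/2) = -1 by norm_num, Real.rpow_neg_one]
  -- product lower bound
  have hprod : Real.sqrt 2 * (L:ℝ) * (δj + 1)⁻¹
      ≤ Real.sqrt 2 * (L:ℝ) * ∏ i, (((L:ℤ) - |nvec i| + 1 : ℤ) : ℝ) ^ (-(1/(d:ℝ))) := by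
    apply mul_le_mul_of_nonneg_left _ (by positivity)
    have hconst : ∏ _i : Fin d, (δj + 1) ^ (-(1/(d:ℝ))) = (δj + 1)⁻¹ := by
      rw [Finset.prod_const, Finset.card_univ, Fintype.card_fin,
        ← Real.rpow_natCast ((δj + 1) ^ (-(1/(d:ℝ)))) d, ← Real.rpow_mul (by positivity)]
      rw [show -(1/(d:ℝ)) * (d:ℝ) = -1 by field_simp]
      exact Real.rpow_neg_one _
    rw [← hconst]
    apply Finset.prod_le_prod (fun i _ => Real.rpow_nonneg (by positivity) _)
    intro i _
    have hi' := hmem i; rw [Finset.mem_Ioc] at hi'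
    have hbase : (0:ℝ) < (((L:ℤ) - |nvec i| + 1 : ℤ) : ℝ) := by
      have : (0:ℤ) < (L:ℤ) - |nvec i| + 1 := by
        have := abs_le.mpr ⟨by omega, hi'.2⟩; omega
      exact_mod_cast this
    apply Real.rpow_le_rpow_of_nonpos hbase _ (neg_nonpos.mpr (by positivity))
    · rw [hδj]
      have : (L:ℤ) - |nvec i| + 1 ≤ ((L:ℤ) - |nvec j|) + 1 := by
        have := hjmin i (Finset.mem_univ i); omega
      calc (((L:ℤ) - |nvec i| + 1 : ℤ) : ℝ) ≤ ((((L:ℤ) - |nvec j|) + 1 : ℤ) : ℝ) := by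
            exact_mod_cast this
        _ = (((L:ℤ) - |nvec j| : ℤ) : ℝ) + 1 := by push_cast; ring
  -- final comparison
  have hmid : (Real.sqrt 2 * (δj / (L:ℝ)))⁻¹ ≤ Real.sqrt 2 * (L:ℝ) * (δj + 1)⁻¹ := by
    have hs2 : Real.sqrt 2 * Real.sqrt 2 = 2 := Real.mul_self_sqrt (by norm_num)
    have hs2pos : (0:ℝ) < Real.sqrt 2 := Real.sqrt_pos.mpr (by norm_num)
    have e1 : (Real.sqrt 2 * (δj / (L:ℝ)))⁻¹ = (L:ℝ)/(Real.sqrt 2 * δj) := by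
      field_simp
    have e2 : Real.sqrt 2 * (L:ℝ) * (δj+1)⁻¹ = Real.sqrt 2 * (L:ℝ)/(δj+1) := by
      rw [← div_eq_mul_inv]
    rw [e1, e2, div_le_div_iff₀ (by positivity) (by positivity)]
    nlinarith [hs2, mul_nonneg hLR.le (sub_nonneg.mpr hδj1)]
  calc E ^ (-(1/2:ℝ)) ≤ (Real.sqrt 2 * (δj / (L:ℝ)))⁻¹ := h1.trans_eq h2
    _ ≤ Real.sqrt 2 * (L:ℝ) * (δj + 1)⁻¹ := hmid
    _ ≤ _ := hprod

/-- Inner 1-D sum bound. -/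
lemma aux_inner_sum (d L : ℕ) (hd : 2 ≤ d) (hL : 0 < L) :
    ∑ n ∈ Finset.Ioc (-(L:ℤ)) (L:ℤ), (((L:ℤ) - |n| + 1 : ℤ) : ℝ) ^ (-(1/(d:ℝ)))
      ≤ 12 * (L:ℝ) ^ (1 - 1/(d:ℝ)) := by
  have hdR : (0:ℝ) < (d:ℝ) := by positivity
  have hd2 : (2:ℝ) ≤ (d:ℝ) := by exact_mod_cast hd
  set s : ℝ := 1/(d:ℝ) with hs
  have hs0 : 0 ≤ s := by positivity
  have hs2 : s ≤ 1/2 := by rw [hs]; rw [div_le_div_iff₀ hdR (by norm_num)]; linarith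
  have hs1 : s < 1 := lt_of_le_of_lt hs2 (by norm_num)
  have hp2 : (1/2:ℝ) ≤ 1 - s := by linarith
  have hLR : (0:ℝ) < (L:ℝ) := by exact_mod_cast hL
  have hsplit : ∀ n ∈ Finset.Ioc (-(L:ℤ)) (L:ℤ),
      (((L:ℤ) - |n| + 1 : ℤ) : ℝ) ^ (-s)
        ≤ (((L:ℤ) + 1 - n : ℤ) : ℝ) ^ (-s) + (((L:ℤ) + 1 + n : ℤ) : ℝ) ^ (-s) := by
    intro n hn
    rw [Finset.mem_Ioc] at hn
    rcases le_or_gt 0 n with h | h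
    · have he : ((L:ℤ) - |n| + 1 : ℤ) = ((L:ℤ) + 1 - n : ℤ) := by
        rw [abs_of_nonneg h]; ring
      rw [he]
      have : (0:ℝ) ≤ (((L:ℤ) + 1 + n : ℤ) : ℝ) := by exact_mod_cast (by omega : (0:ℤ) ≤ (L:ℤ)+1+n)
      exact le_add_of_nonneg_right (Real.rpow_nonneg this _)
    · have he : ((L:ℤ) - |n| + 1 : ℤ) = ((L:ℤ) + 1 + n : ℤ) := by
        rw [abs_of_neg h]; ring
      rw [he]
      have : (0:ℝ) ≤ (((L:ℤ) + 1 - n : ℤ) : ℝ) := by exact_mod_cast (by omega : (0:ℤ) ≤ (L:ℤ)+1-n)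
      exact le_add_of_nonneg_left (Real.rpow_nonneg this _)
  have hsum1 : ∑ n ∈ Finset.Ioc (-(L:ℤ)) (L:ℤ), (((L:ℤ) + 1 - n : ℤ) : ℝ) ^ (-s)
      = ∑ m ∈ Finset.Icc 1 (2*L), (m:ℝ) ^ (-s) := by
    apply Finset.sum_nbij' (fun n => ((L:ℤ) + 1 - n).toNat) (fun m => (L:ℤ) + 1 - (m:ℤ))
    · intro a ha; rw [Finset.mem_Ioc] at ha; rw [Finset.mem_Icc]; omega
    · intro a ha; rw [Finset.mem_Icc] at ha; rw [Finset.mem_Ioc]; omega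
    · intro a ha; rw [Finset.mem_Ioc] at ha; omega
    · intro a ha; rw [Finset.mem_Icc] at ha; omega
    · intro a ha; rw [Finset.mem_Ioc] at ha
      congr 1
      have h0 : (0:ℤ) ≤ (L:ℤ) + 1 - a := by omega
      exact_mod_cast (Int.toNat_of_nonneg h0).symm
  have hsum2 : ∑ n ∈ Finset.Ioc (-(L:ℤ)) (L:ℤ), (((L:ℤ) + 1 + n : ℤ) : ℝ) ^ (-s)
      = ∑ m ∈ Finset.Icc 2 (2*L+1), (m:ℝ) ^ (-s) := by
    apply Finset.sum_nbij' (fun n => ((L:ℤ) + 1 + n).toNat) (fun m => (m:ℤ) - (L:ℤ) - 1)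
    · intro a ha; rw [Finset.mem_Ioc] at ha; rw [Finset.mem_Icc]; omega
    · intro a ha; rw [Finset.mem_Icc] at ha; rw [Finset.mem_Ioc]; omega
    · intro a ha; rw [Finset.mem_Ioc] at ha; omega
    · intro a ha; rw [Finset.mem_Icc] at ha; omega
    · intro a ha; rw [Finset.mem_Ioc] at ha
      congr 1
      have h0 : (0:ℤ) ≤ (L:ℤ) + 1 + a := by omega
      exact_mod_cast (Int.toNat_of_nonneg h0).symm
  have hnonneg : ∀ m ∈ Finset.Icc 1 (2*L+1), (0:ℝ) ≤ (m:ℝ) ^ (-s) :=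
    fun m _ => Real.rpow_nonneg (by positivity) _
  have hIcc : ∑ m ∈ Finset.Icc 1 (2*L+1), (m:ℝ) ^ (-s)
      ≤ ((2*L+1:ℕ):ℝ) ^ (1 - s) / (1 - s) := aux_sum_rpow_neg_le s hs0 hs1 (2*L+1)
  have hD : ((2*L+1:ℕ):ℝ) ^ (1 - s) / (1 - s) ≤ 6 * (L:ℝ) ^ (1 - s) := by
    have hX : ((2*L+1:ℕ):ℝ) ^ (1 - s) ≤ 3 * (L:ℝ) ^ (1 - s) := by
      have h31 : ((2*L+1:ℕ):ℝ) ≤ 3 * (L:ℝ) := by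
        push_cast
        have : (1:ℝ) ≤ (L:ℝ) := by exact_mod_cast hL
        linarith
      calc ((2*L+1:ℕ):ℝ) ^ (1 - s) ≤ (3 * (L:ℝ)) ^ (1 - s) :=
            Real.rpow_le_rpow (by positivity) h31 (by linarith)
        _ = (3:ℝ) ^ (1 - s) * (L:ℝ) ^ (1 - s) := Real.mul_rpow (by norm_num) hLR.le
        _ ≤ 3 * (L:ℝ) ^ (1 - s) := by
            have : (3:ℝ) ^ (1 - s) ≤ (3:ℝ) ^ (1:ℝ) :=
              Real.rpow_le_rpow_of_exponent_le (by norm_num) (by linarith)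
            rw [Real.rpow_one] at this
            exact mul_le_mul_of_nonneg_right this (Real.rpow_nonneg hLR.le _)
    rw [div_le_iff₀ (by linarith)]
    nlinarith [Real.rpow_nonneg hLR.le (1 - s), hX]
  calc ∑ n ∈ Finset.Ioc (-(L:ℤ)) (L:ℤ), (((L:ℤ) - |n| + 1 : ℤ) : ℝ) ^ (-s)
      ≤ ∑ n ∈ Finset.Ioc (-(L:ℤ)) (L:ℤ),
          ((((L:ℤ) + 1 - n : ℤ) : ℝ) ^ (-s) + (((L:ℤ) + 1 + n : ℤ) : ℝ) ^ (-s)) :=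
        Finset.sum_le_sum hsplit
    _ = (∑ m ∈ Finset.Icc 1 (2*L), (m:ℝ) ^ (-s)) + ∑ m ∈ Finset.Icc 2 (2*L+1), (m:ℝ) ^ (-s) := by
        rw [Finset.sum_add_distrib, hsum1, hsum2]
    _ ≤ (∑ m ∈ Finset.Icc 1 (2*L+1), (m:ℝ) ^ (-s)) + ∑ m ∈ Finset.Icc 1 (2*L+1), (m:ℝ) ^ (-s) := by
        apply add_le_add
        · exact Finset.sum_le_sum_of_subset_of_nonneg
            (Finset.Icc_subset_Icc le_rfl (by omega)) (fun m hm _ => hnonneg m hm)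
        · exact Finset.sum_le_sum_of_subset_of_nonneg
            (Finset.Icc_subset_Icc (by omega) le_rfl) (fun m hm _ => hnonneg m hm)
    _ ≤ ((2*L+1:ℕ):ℝ) ^ (1 - s) / (1 - s) + ((2*L+1:ℕ):ℝ) ^ (1 - s) / (1 - s) :=
        add_le_add hIcc hIcc
    _ ≤ 6 * (L:ℝ) ^ (1 - s) + 6 * (L:ℝ) ^ (1 - s) := add_le_add hD hD
    _ = 12 * (L:ℝ) ^ (1 - s) := by ring

/-- For `d ≥ 2`, the Riemann sums of `𝓔_{k+Q}^{−1/2}` over the discrete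
Brillouin zone `K_L = {πn/L : −L < n ≤ L}^d`, omitting the singular momentum
`Q = (π,…,π)`, are bounded uniformly in the system size `L`:
`(2L)^{−d} Σ_{k ∈ K_L, k ≠ Q} (d + Σᵢ cos k⁽ⁱ⁾)^{−1/2} ≤ C`. -/
theorem riemann_sum_inverse_sqrt_dispersion_bounded (d : ℕ) (hd : 2 ≤ d) :
    ∃ C : ℝ, 0 < C ∧ ∀ L : ℕ, 0 < L →
      (1 / (2 * (L : ℝ)) ^ d) *
          ∑ nvec ∈ (Fintype.piFinset fun _ : Fin d =>
              Finset.Ioc (-(L : ℤ)) (L : ℤ)).filter (fun nvec => nvec ≠ fun _ => (L : ℤ)),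
            ((d : ℝ) + ∑ i, Real.cos (Real.pi * (nvec i : ℝ) / (L : ℝ))) ^ (-(1 / 2 : ℝ))
        ≤ C := by
  refine ⟨Real.sqrt 2 * 6 ^ d, by positivity, ?_⟩
  intro L hL
  have hLR : (0:ℝ) < (L:ℝ) := by exact_mod_cast hL
  have hdR : (0:ℝ) < (d:ℝ) := by positivity
  set p : ℝ := 1 - 1/(d:ℝ) with hp
  -- Step 1: per-term bound and factorization
  have hstep1 :
      (∑ nvec ∈ (Fintype.piFinset fun _ : Fin d =>
          Finset.Ioc (-(L : ℤ)) (L : ℤ)).filter (fun nvec => nvec ≠ fun _ => (L : ℤ)),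
        ((d : ℝ) + ∑ i, Real.cos (Real.pi * (nvec i : ℝ) / (L : ℝ))) ^ (-(1 / 2 : ℝ)))
      ≤ Real.sqrt 2 * (L:ℝ) *
          ∏ _i : Fin d, ∑ n ∈ Finset.Ioc (-(L:ℤ)) (L:ℤ),
            (((L:ℤ) - |n| + 1 : ℤ) : ℝ) ^ (-(1/(d:ℝ))) := by
    calc (∑ nvec ∈ (Fintype.piFinset fun _ : Fin d =>
          Finset.Ioc (-(L : ℤ)) (L : ℤ)).filter (fun nvec => nvec ≠ fun _ => (L : ℤ)),
        ((d : ℝ) + ∑ i, Real.cos (Real.pi * (nvec i : ℝ) / (L : ℝ))) ^ (-(1 / 2 : ℝ)))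
        ≤ ∑ nvec ∈ (Fintype.piFinset fun _ : Fin d =>
            Finset.Ioc (-(L : ℤ)) (L : ℤ)).filter (fun nvec => nvec ≠ fun _ => (L : ℤ)),
            Real.sqrt 2 * (L:ℝ) * ∏ i, (((L:ℤ) - |nvec i| + 1 : ℤ) : ℝ) ^ (-(1/(d:ℝ))) := by
          apply Finset.sum_le_sum
          intro nvec hnvec
          rw [Finset.mem_filter, Fintype.mem_piFinset] at hnvec
          exact aux_term_le d L hd hL nvec hnvec.1 hnvec.2
      _ ≤ ∑ nvec ∈ (Fintype.piFinset fun _ : Fin d => Finset.Ioc (-(L : ℤ)) (L : ℤ)),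
            Real.sqrt 2 * (L:ℝ) * ∏ i, (((L:ℤ) - |nvec i| + 1 : ℤ) : ℝ) ^ (-(1/(d:ℝ))) := by
          apply Finset.sum_le_sum_of_subset_of_nonneg (Finset.filter_subset _ _)
          intro nvec hmemv _
          rw [Fintype.mem_piFinset] at hmemv
          have : (0:ℝ) ≤ ∏ i, (((L:ℤ) - |nvec i| + 1 : ℤ) : ℝ) ^ (-(1/(d:ℝ))) := by
            apply Finset.prod_nonneg
            intro i _
            apply Real.rpow_nonneg
            have hi := hmemv i
            rw [Finset.mem_Ioc] at hi
            have : (0:ℤ) ≤ (L:ℤ) - |nvec i| + 1 := by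
              have := abs_le.mpr ⟨le_of_lt hi.1, hi.2⟩; omega
            exact_mod_cast this
          positivity
      _ = Real.sqrt 2 * (L:ℝ) *
            ∑ nvec ∈ (Fintype.piFinset fun _ : Fin d => Finset.Ioc (-(L : ℤ)) (L : ℤ)),
              ∏ i, (((L:ℤ) - |nvec i| + 1 : ℤ) : ℝ) ^ (-(1/(d:ℝ))) := by
          rw [Finset.mul_sum]
      _ = Real.sqrt 2 * (L:ℝ) *
            ∏ _i : Fin d, ∑ n ∈ Finset.Ioc (-(L:ℤ)) (L:ℤ),
              (((L:ℤ) - |n| + 1 : ℤ) : ℝ) ^ (-(1/(d:ℝ))) := by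
          rw [Finset.prod_univ_sum]
  -- Step 2: inner sums
  have hstep2 : Real.sqrt 2 * (L:ℝ) *
        (∏ _i : Fin d, ∑ n ∈ Finset.Ioc (-(L:ℤ)) (L:ℤ),
          (((L:ℤ) - |n| + 1 : ℤ) : ℝ) ^ (-(1/(d:ℝ))))
      ≤ Real.sqrt 2 * (L:ℝ) * (12 * (L:ℝ) ^ p) ^ d := by
    apply mul_le_mul_of_nonneg_left _ (by positivity)
    calc (∏ _i : Fin d, ∑ n ∈ Finset.Ioc (-(L:ℤ)) (L:ℤ),
          (((L:ℤ) - |n| + 1 : ℤ) : ℝ) ^ (-(1/(d:ℝ))))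
        ≤ ∏ _i : Fin d, 12 * (L:ℝ) ^ p := by
          apply Finset.prod_le_prod
          · intro i _
            apply Finset.sum_nonneg
            intro n hn
            rw [Finset.mem_Ioc] at hn
            apply Real.rpow_nonneg
            have : (0:ℤ) ≤ (L:ℤ) - |n| + 1 := by
              have := abs_le.mpr ⟨le_of_lt hn.1, hn.2⟩; omega
            exact_mod_cast this
          · exact fun i _ => aux_inner_sum d L hd hL
      _ = (12 * (L:ℝ) ^ p) ^ d := by
          rw [Finset.prod_const, Finset.card_univ, Fintype.card_fin]
  -- Step 3: arithmetic
  have harith : Real.sqrt 2 * (L:ℝ) * (12 * (L:ℝ) ^ p) ^ d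
      = Real.sqrt 2 * 12 ^ d * (L:ℝ) ^ d := by
    rw [mul_pow, ← Real.rpow_natCast ((L:ℝ) ^ p) d, ← Real.rpow_mul hLR.le]
    have hpd : p * (d:ℝ) = (d:ℝ) - 1 := by
      rw [hp]; field_simp
    rw [hpd]
    have : (L:ℝ) * (L:ℝ) ^ ((d:ℝ) - 1) = (L:ℝ) ^ (d:ℕ) := by
      nth_rewrite 1 [← Real.rpow_one (L:ℝ)]
      rw [← Real.rpow_add hLR, ← Real.rpow_natCast (L:ℝ) d]
      norm_num
    calc Real.sqrt 2 * (L:ℝ) * (12 ^ d * (L:ℝ) ^ ((d:ℝ) - 1))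
        = Real.sqrt 2 * 12 ^ d * ((L:ℝ) * (L:ℝ) ^ ((d:ℝ) - 1)) := by ring
      _ = Real.sqrt 2 * 12 ^ d * (L:ℝ) ^ (d:ℕ) := by rw [this]
  have hfinal : (1 / (2 * (L : ℝ)) ^ d) * (Real.sqrt 2 * 12 ^ d * (L:ℝ) ^ d)
      = Real.sqrt 2 * 6 ^ d := by
    rw [mul_pow]
    have h2 : ((2:ℝ)) ^ d ≠ 0 := by positivity
    have hLd : ((L:ℝ)) ^ d ≠ 0 := by positivity
    field_simp
    rw [show (12:ℝ) = 6 * 2 by norm_num, mul_pow]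
    ring
  calc (1 / (2 * (L : ℝ)) ^ d) *
          ∑ nvec ∈ (Fintype.piFinset fun _ : Fin d =>
              Finset.Ioc (-(L : ℤ)) (L : ℤ)).filter (fun nvec => nvec ≠ fun _ => (L : ℤ)),
            ((d : ℝ) + ∑ i, Real.cos (Real.pi * (nvec i : ℝ) / (L : ℝ))) ^ (-(1 / 2 : ℝ))
      ≤ (1 / (2 * (L : ℝ)) ^ d) * (Real.sqrt 2 * 12 ^ d * (L:ℝ) ^ d) := by
        apply mul_le_mul_of_nonneg_left _ (by positivity)
        exact (hstep1.trans hstep2).trans_eq harith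
    _ = Real.sqrt 2 * 6 ^ d := hfinal
end
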